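/- Let K ≥ 1, let ℓ₁ > ℓ₂ > … > ℓ_K > 0 and let ε₁,…,ε_K ∈ {−1,1}. Then Σ_{k=1}^K ℓ_k² ( 1/ℓ_k + 2 (ε_k/√ℓ_k) Σ_{j=1}^{k−1} ε_j/√ℓ_j ) = Σ_{k=1}^{K−1} (ℓ_k² − ℓ_{k+1}²) ( Σ_{j=1}^k ε_j/√ℓ_j )² + ℓ_K² ( Σ_{j=1}^K ε_j/√ℓ_j )², and in particular Σ_{k=1}^K ℓ_k ( 1 + 2 Σ_{j=1}^{k−1} ε_k ε_j √(ℓ_k/ℓ_j) ) > 0. -/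

import Mathlib

private lemma abel_aux (n : ℕ) (a S : ℕ → ℝ) (hS0 : S 0 = 0) :
    ∑ k ∈ Finset.Icc 1 (n + 1), a k * (S k ^ 2 - S (k - 1) ^ 2)
      = ∑ k ∈ Finset.Icc 1 n, (a k - a (k + 1)) * S k ^ 2 + a (n + 1) * S (n + 1) ^ 2 := by
  induction n with
  | zero => simp [hS0]
  | succ m ih =>
    rw [Finset.sum_Icc_succ_top (by omega : 1 ≤ m + 1),
        Finset.sum_Icc_succ_top (by omega : 1 ≤ m + 1 + 1), ih]
    simp only [Nat.add_sub_cancel]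
    ring

/-- Algebraic identity for the multi-bubble energy: for `ℓ₁ > … > ℓ_K > 0` and signs
`ε_k ∈ {-1,1}`, the energy sum `Σ_k ℓ_k²(1/ℓ_k + 2(ε_k/√ℓ_k) Σ_{j<k} ε_j/√ℓ_j)` admits an
Abel resummation as a positive combination of squares; in particular
`Σ_k ℓ_k (1 + 2 Σ_{j<k} ε_k ε_j √(ℓ_k/ℓ_j)) > 0`. -/
theorem multibubble_energy_positive (K : ℕ) (hK : 1 ≤ K) (ℓ ε : ℕ → ℝ)
    (hℓpos : ∀ k ∈ Finset.Icc 1 K, 0 < ℓ k)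
    (hℓmono : ∀ j ∈ Finset.Icc 1 K, ∀ k ∈ Finset.Icc 1 K, j < k → ℓ k < ℓ j)
    (hε : ∀ k ∈ Finset.Icc 1 K, ε k = 1 ∨ ε k = -1) :
    (∑ k ∈ Finset.Icc 1 K, ℓ k ^ 2 *
        (1 / ℓ k + 2 * (ε k / Real.sqrt (ℓ k)) *
          ∑ j ∈ Finset.Ico 1 k, ε j / Real.sqrt (ℓ j)))
      = (∑ k ∈ Finset.Icc 1 (K - 1), (ℓ k ^ 2 - ℓ (k + 1) ^ 2) *
            (∑ j ∈ Finset.Icc 1 k, ε j / Real.sqrt (ℓ j)) ^ 2)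
        + ℓ K ^ 2 * (∑ j ∈ Finset.Icc 1 K, ε j / Real.sqrt (ℓ j)) ^ 2 ∧
    0 < ∑ k ∈ Finset.Icc 1 K, ℓ k *
        (1 + 2 * ∑ j ∈ Finset.Ico 1 k, ε k * ε j * Real.sqrt (ℓ k / ℓ j)) := by
  set S : ℕ → ℝ := fun k => ∑ j ∈ Finset.Icc 1 k, ε j / Real.sqrt (ℓ j) with hS
  have hS0 : S 0 = 0 := by simp [hS]
  -- termwise rewriting of the first sum
  have hterm : ∀ k ∈ Finset.Icc 1 K,
      ℓ k ^ 2 * (1 / ℓ k + 2 * (ε k / Real.sqrt (ℓ k)) *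
        ∑ j ∈ Finset.Ico 1 k, ε j / Real.sqrt (ℓ j))
      = ℓ k ^ 2 * (S k ^ 2 - S (k - 1) ^ 2) := by
    intro k hk
    simp only [Finset.mem_Icc] at hk
    obtain ⟨m, rfl⟩ : ∃ m, k = m + 1 := ⟨k - 1, by omega⟩
    have hIco : Finset.Ico 1 (m + 1) = Finset.Icc 1 m := by
      rw [Finset.Ico_add_one_right_eq_Icc]
    have hSk : S (m + 1) = S m + ε (m + 1) / Real.sqrt (ℓ (m + 1)) := by
      simp only [hS]
      rw [Finset.sum_Icc_succ_top (by omega : 1 ≤ m + 1)]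
    have hlpos : 0 < ℓ (m + 1) := hℓpos _ (by simp; omega)
    have hsq : (ε (m + 1) / Real.sqrt (ℓ (m + 1))) ^ 2 = 1 / ℓ (m + 1) := by
      have he : ε (m + 1) ^ 2 = 1 := by
        rcases hε (m + 1) (by simp; omega) with h | h <;> rw [h] <;> ring
      rw [div_pow, he, Real.sq_sqrt hlpos.le]
    rw [hIco]
    show _ = ℓ (m+1) ^ 2 * (S (m + 1) ^ 2 - S m ^ 2)
    rw [hSk]
    have : (S m + ε (m + 1) / Real.sqrt (ℓ (m + 1))) ^ 2 - S m ^ 2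
        = (ε (m + 1) / Real.sqrt (ℓ (m + 1))) ^ 2
          + 2 * (ε (m + 1) / Real.sqrt (ℓ (m + 1))) * S m := by ring
    rw [this, hsq, hS]
  obtain ⟨n, rfl⟩ : ∃ n, K = n + 1 := ⟨K - 1, by omega⟩
  have hid : (∑ k ∈ Finset.Icc 1 (n + 1), ℓ k ^ 2 *
        (1 / ℓ k + 2 * (ε k / Real.sqrt (ℓ k)) *
          ∑ j ∈ Finset.Ico 1 k, ε j / Real.sqrt (ℓ j)))
      = ∑ k ∈ Finset.Icc 1 n, (ℓ k ^ 2 - ℓ (k + 1) ^ 2) * S k ^ 2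
        + ℓ (n + 1) ^ 2 * S (n + 1) ^ 2 := by
    rw [Finset.sum_congr rfl hterm]
    exact abel_aux n (fun k => ℓ k ^ 2) S hS0
  have hsimp : n + 1 - 1 = n := by omega
  constructor
  · rw [hsimp]; exact hid
  -- second sum equals first sum termwise
  have hterm2 : ∀ k ∈ Finset.Icc 1 (n + 1),
      ℓ k * (1 + 2 * ∑ j ∈ Finset.Ico 1 k, ε k * ε j * Real.sqrt (ℓ k / ℓ j))
      = ℓ k ^ 2 * (1 / ℓ k + 2 * (ε k / Real.sqrt (ℓ k)) *
          ∑ j ∈ Finset.Ico 1 k, ε j / Real.sqrt (ℓ j)) := by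
    intro k hk
    simp only [Finset.mem_Icc] at hk
    have hlk : 0 < ℓ k := hℓpos _ (by simp [hk])
    have hsk : 0 < Real.sqrt (ℓ k) := Real.sqrt_pos.2 hlk
    have hterms : ∀ j ∈ Finset.Ico 1 k,
        ε k * ε j * Real.sqrt (ℓ k / ℓ j)
        = ℓ k * (ε k / Real.sqrt (ℓ k) * (ε j / Real.sqrt (ℓ j))) := by
      intro j hj
      simp only [Finset.mem_Ico] at hj
      have hlj : 0 < ℓ j := hℓpos _ (by simp; omega)
      have hsj : 0 < Real.sqrt (ℓ j) := Real.sqrt_pos.2 hlj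
      have hmk : Real.sqrt (ℓ k) * Real.sqrt (ℓ k) = ℓ k := Real.mul_self_sqrt hlk.le
      have hmj : Real.sqrt (ℓ j) * Real.sqrt (ℓ j) = ℓ j := Real.mul_self_sqrt hlj.le
      rw [Real.sqrt_div hlk.le]
      field_simp
      linear_combination (ε k * ε j) * hmk
    have hsum_eq : (∑ j ∈ Finset.Ico 1 k, ε k * ε j * Real.sqrt (ℓ k / ℓ j))
        = ℓ k * ((ε k / Real.sqrt (ℓ k)) * ∑ j ∈ Finset.Ico 1 k, ε j / Real.sqrt (ℓ j)) := by
      rw [Finset.sum_congr rfl hterms, ← Finset.mul_sum]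
      congr 1
      rw [Finset.mul_sum]
    rw [hsum_eq]
    field_simp
  rw [Finset.sum_congr rfl hterm2, hid]
  -- positivity
  have hSK : ∀ k, 1 ≤ k → k ≤ n + 1 → ℓ (k + 1) ^ 2 < ℓ k ^ 2 → True := fun _ _ _ _ => trivial
  have hnonneg : ∀ k ∈ Finset.Icc 1 n, 0 ≤ (ℓ k ^ 2 - ℓ (k + 1) ^ 2) * S k ^ 2 := by
    intro k hk
    simp only [Finset.mem_Icc] at hk
    have hk1 : k ∈ Finset.Icc 1 (n + 1) := by simp; omega
    have hk2 : k + 1 ∈ Finset.Icc 1 (n + 1) := by simp; omega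
    have hlt : ℓ (k + 1) < ℓ k := hℓmono _ hk1 _ hk2 (by omega)
    have hp1 : 0 < ℓ (k + 1) := hℓpos _ hk2
    have h : ℓ (k + 1) ^ 2 < ℓ k ^ 2 := by nlinarith
    exact mul_nonneg (by linarith) (sq_nonneg _)
  have hS1 : S 1 ≠ 0 := by
    have hl1 : 0 < ℓ 1 := hℓpos _ (by simp)
    have hs1 : 0 < Real.sqrt (ℓ 1) := Real.sqrt_pos.2 hl1
    have : S 1 = ε 1 / Real.sqrt (ℓ 1) := by simp [hS]
    rw [this]
    rcases hε 1 (by simp) with h | h <;> rw [h] <;> positivity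
  rcases Nat.eq_zero_or_pos n with rfl | hn
  · rw [Finset.Icc_eq_empty (by omega : ¬ (1:ℕ) ≤ 0), Finset.sum_empty, zero_add]
    have hl1 : 0 < ℓ 1 := hℓpos _ (by simp)
    have hsq : 0 < S 1 ^ 2 := pow_two_pos_of_ne_zero hS1
    exact mul_pos (pow_pos hl1 2) hsq
  · have hpos1 : 0 < (ℓ 1 ^ 2 - ℓ 2 ^ 2) * S 1 ^ 2 := by
      have h1 : (1:ℕ) ∈ Finset.Icc 1 (n + 1) := by simp
      have h2 : (2:ℕ) ∈ Finset.Icc 1 (n + 1) := by simp; omega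
      have hlt : ℓ 2 < ℓ 1 := hℓmono _ h1 _ h2 (by omega)
      have hp2 : 0 < ℓ 2 := hℓpos _ h2
      have hsq : 0 < S 1 ^ 2 := pow_two_pos_of_ne_zero hS1
      have : ℓ 2 ^ 2 < ℓ 1 ^ 2 := by nlinarith
      exact mul_pos (by linarith) hsq
    have hsum : 0 < ∑ k ∈ Finset.Icc 1 n, (ℓ k ^ 2 - ℓ (k + 1) ^ 2) * S k ^ 2 := by
      apply Finset.sum_pos' hnonneg
      exact ⟨1, Finset.mem_Icc.2 ⟨le_refl 1, hn⟩, hpos1⟩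
    have hlast : 0 ≤ ℓ (n + 1) ^ 2 * S (n + 1) ^ 2 := by positivity
    linarith
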